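/- Fix z ∈ ℝ and define f : ℝ → ℝ by f(δ) = δ·η₀(z·δ²)/ξ(z·δ²). Then at every point δ₀ with ξ(z·δ₀²) ≠ 0, the function f is differentiable with f'(δ₀) = 1 − z·f(δ₀)². (Thus the scalar CP-propagated ratio f = y/y' for the constant-coefficient equation y'' = z·y satisfies the scalar Riccati equation.) -/

import Mathlib

/-- The CP function `ξ`. -/
noncomputable def xi (z : ℝ) : ℝ :=
  if z ≤ 0 then Real.cos (Real.sqrt (-z)) else Real.cosh (Real.sqrt z)

/-- The CP function `η₀`. -/
noncomputable def eta0 (z : ℝ) : ℝ :=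
  if z < 0 then Real.sin (Real.sqrt (-z)) / Real.sqrt (-z)
  else if z = 0 then 1
  else Real.sinh (Real.sqrt z) / Real.sqrt z

lemma sqrt_mul_sq (z δ : ℝ) (hz : 0 ≤ z) : Real.sqrt (z * δ ^ 2) = Real.sqrt z * |δ| := by
  rw [Real.sqrt_mul hz, ← Real.sqrt_sq_eq_abs]

lemma xi_neg (z δ : ℝ) (hz : z < 0) :
    xi (z * δ ^ 2) = Real.cos (Real.sqrt (-z) * δ) := by
  have h1 : z * δ ^ 2 ≤ 0 := mul_nonpos_of_nonpos_of_nonneg hz.le (by positivity)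
  rw [xi, if_pos h1, show -(z * δ ^ 2) = (-z) * δ ^ 2 by ring,
    sqrt_mul_sq _ _ (by linarith),
    show Real.sqrt (-z) * |δ| = |Real.sqrt (-z) * δ| by
      rw [abs_mul, abs_of_nonneg (Real.sqrt_nonneg _)],
    Real.cos_abs]

lemma xi_pos (z δ : ℝ) (hz : 0 < z) :
    xi (z * δ ^ 2) = Real.cosh (Real.sqrt z * δ) := by
  rcases eq_or_ne δ 0 with rfl | hδ
  · simp [xi]
  · have h1 : 0 < z * δ ^ 2 := by positivity
    rw [xi, if_neg (by linarith), sqrt_mul_sq _ _ hz.le,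
      show Real.sqrt z * |δ| = |Real.sqrt z * δ| by
        rw [abs_mul, abs_of_nonneg (Real.sqrt_nonneg _)],
      Real.cosh_abs]

lemma pt_neg (z : ℝ) (hz : z < 0) (δ : ℝ) :
    δ * eta0 (z * δ ^ 2) / xi (z * δ ^ 2) =
    Real.sin (Real.sqrt (-z) * δ) / (Real.sqrt (-z) * Real.cos (Real.sqrt (-z) * δ)) := by
  have hc0 : 0 < Real.sqrt (-z) := Real.sqrt_pos.mpr (by linarith)
  rw [xi_neg z δ hz]
  rcases eq_or_ne δ 0 with rfl | hδ
  · simp [eta0]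
  · have h1 : z * δ ^ 2 < 0 := mul_neg_of_neg_of_pos hz (by positivity)
    rw [eta0, if_pos h1, show -(z * δ ^ 2) = (-z) * δ ^ 2 by ring,
      sqrt_mul_sq _ _ (by linarith)]
    rcases abs_choice δ with habs | habs
    · rw [habs]
      field_simp
    · rw [habs, mul_neg, Real.sin_neg]
      field_simp

lemma pt_pos (z : ℝ) (hz : 0 < z) (δ : ℝ) :
    δ * eta0 (z * δ ^ 2) / xi (z * δ ^ 2) =
    Real.sinh (Real.sqrt z * δ) / (Real.sqrt z * Real.cosh (Real.sqrt z * δ)) := by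
  have hc0 : 0 < Real.sqrt z := Real.sqrt_pos.mpr hz
  rw [xi_pos z δ hz]
  rcases eq_or_ne δ 0 with rfl | hδ
  · simp
  · have h1 : 0 < z * δ ^ 2 := by positivity
    rw [eta0, if_neg (not_lt.mpr h1.le), if_neg h1.ne', sqrt_mul_sq _ _ hz.le]
    rcases abs_choice δ with habs | habs
    · rw [habs]
      field_simp
    · rw [habs, mul_neg, Real.sinh_neg]
      field_simp

/-- The scalar CP-propagated ratio `f(δ) = δ·η₀(z·δ²)/ξ(z·δ²)` satisfies the
scalar Riccati equation `f' = 1 - z·f²` wherever `ξ(z·δ²) ≠ 0`. -/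
theorem cp_ratio_riccati (z : ℝ) (δ₀ : ℝ) (h : xi (z * δ₀ ^ 2) ≠ 0) :
    HasDerivAt (fun δ : ℝ => δ * eta0 (z * δ ^ 2) / xi (z * δ ^ 2))
      (1 - z * (δ₀ * eta0 (z * δ₀ ^ 2) / xi (z * δ₀ ^ 2)) ^ 2) δ₀ := by
  rcases lt_trichotomy z 0 with hz | rfl | hz
  · set c := Real.sqrt (-z) with hc
    have hc0 : 0 < c := Real.sqrt_pos.mpr (by linarith)
    have hc2 : c ^ 2 = -z := Real.sq_sqrt (by linarith)
    have hcos : Real.cos (c * δ₀) ≠ 0 := by rw [xi_neg z δ₀ hz] at h; exact h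
    have hfun : (fun δ : ℝ => δ * eta0 (z * δ ^ 2) / xi (z * δ ^ 2)) =
        fun δ : ℝ => Real.sin (c * δ) / (c * Real.cos (c * δ)) := funext (pt_neg z hz)
    rw [hfun, pt_neg z hz δ₀]
    have hlin : HasDerivAt (fun δ : ℝ => c * δ) c δ₀ := by
      simpa using (hasDerivAt_id δ₀).const_mul c
    have h1 : HasDerivAt (fun δ : ℝ => Real.sin (c * δ)) (Real.cos (c * δ₀) * c) δ₀ :=
      (Real.hasDerivAt_sin (c * δ₀)).comp δ₀ hlin
    have h2 : HasDerivAt (fun δ : ℝ => c * Real.cos (c * δ)) (c * (-Real.sin (c * δ₀) * c)) δ₀ :=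
      ((Real.hasDerivAt_cos (c * δ₀)).comp δ₀ hlin).const_mul c
    have h3 : HasDerivAt (fun δ : ℝ => Real.sin (c * δ) / (c * Real.cos (c * δ))) _ δ₀ :=
      h1.div h2 (mul_ne_zero hc0.ne' hcos)
    convert h3 using 1
    rw [← hc]
    have hs := Real.sin_sq_add_cos_sq (c * δ₀)
    field_simp
    nlinarith [hs, hc2]
  · have hfun : (fun δ : ℝ => δ * eta0 (0 * δ ^ 2) / xi (0 * δ ^ 2)) = fun δ : ℝ => δ := by
      funext δ; simp [eta0, xi]
    rw [hfun]
    simpa using hasDerivAt_id' δ₀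
  · set c := Real.sqrt z with hc
    have hc0 : 0 < c := Real.sqrt_pos.mpr hz
    have hc2 : c ^ 2 = z := Real.sq_sqrt hz.le
    have hcosh : Real.cosh (c * δ₀) ≠ 0 := (Real.cosh_pos (c * δ₀)).ne'
    have hfun : (fun δ : ℝ => δ * eta0 (z * δ ^ 2) / xi (z * δ ^ 2)) =
        fun δ : ℝ => Real.sinh (c * δ) / (c * Real.cosh (c * δ)) := funext (pt_pos z hz)
    rw [hfun, pt_pos z hz δ₀]
    have hlin : HasDerivAt (fun δ : ℝ => c * δ) c δ₀ := by
      simpa using (hasDerivAt_id δ₀).const_mul c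
    have h1 : HasDerivAt (fun δ : ℝ => Real.sinh (c * δ)) (Real.cosh (c * δ₀) * c) δ₀ :=
      (Real.hasDerivAt_sinh (c * δ₀)).comp δ₀ hlin
    have h2 : HasDerivAt (fun δ : ℝ => c * Real.cosh (c * δ)) (c * (Real.sinh (c * δ₀) * c)) δ₀ :=
      ((Real.hasDerivAt_cosh (c * δ₀)).comp δ₀ hlin).const_mul c
    have h3 : HasDerivAt (fun δ : ℝ => Real.sinh (c * δ) / (c * Real.cosh (c * δ))) _ δ₀ :=
      h1.div h2 (mul_ne_zero hc0.ne' hcosh)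
    convert h3 using 1
    rw [← hc]
    have hs := Real.cosh_sq_sub_sinh_sq (c * δ₀)
    field_simp
    nlinarith [hs, hc2]
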